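/- arXiv:2404.07641 — 6 statements merged into one kernel-verified Lean document; each statement's English description precedes it below -/
import Mathlib

section
/- The modified Patankar-Euler scheme is conservative: if f^{n+1} solves the MPE equations f_i^{n+1} = f_i^n + Δt(∑_j p_{i,j}(f^n) f_j^{n+1}/f_j^n − ∑_j d_{i,j}(f^n) f_i^{n+1}/f_i^n) with p_{i,j} = d_{j,i} for i ≠ j and p_{i,i} = d_{i,i} = 0, then ∑_i f_i^{n+1} = ∑_i f_i^n. -/
theorem MPE_conservative
    (N : ℕ) (Δt : ℝ) (hΔt : 0 < Δt)
    (fn fn1 : Fin N → ℝ) (hfn : ∀ i, 0 < fn i)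
    (p d : Fin N → Fin N → ℝ)
    (hp : ∀ i j, 0 ≤ p i j) (hd : ∀ i j, 0 ≤ d i j)
    (hsym : ∀ i j, i ≠ j → p i j = d j i)
    (hpd : ∀ i, p i i = 0) (hdd : ∀ i, d i i = 0)
    (hupd : ∀ i, fn1 i = fn i +
      Δt * (∑ j, p i j * (fn1 j / fn j) - ∑ j, d i j * (fn1 i / fn i))) :
    ∑ i, fn1 i = ∑ i, fn i := by
  have hpd' : ∀ i j, p i j = d j i := by
    intro i j
    by_cases h : i = j
    · subst h; rw [hpd, hdd]
    · exact hsym i j h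
  have key : (∑ i, ∑ j, p i j * (fn1 j / fn j)) =
      ∑ i, ∑ j, d i j * (fn1 i / fn i) := by
    rw [Finset.sum_comm]
    apply Finset.sum_congr rfl
    intro j _
    apply Finset.sum_congr rfl
    intro i _
    rw [hpd']
  calc ∑ i, fn1 i
      = ∑ i, (fn i + Δt * (∑ j, p i j * (fn1 j / fn j)
          - ∑ j, d i j * (fn1 i / fn i))) := by
        exact Finset.sum_congr rfl fun i _ => hupd i
    _ = ∑ i, fn i + Δt * ((∑ i, ∑ j, p i j * (fn1 j / fn j))
          - ∑ i, ∑ j, d i j * (fn1 i / fn i)) := by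
        rw [Finset.sum_add_distrib, ← Finset.mul_sum, Finset.sum_sub_distrib]
    _ = ∑ i, fn i := by rw [key]; ring
end

section
/- The linear system defining the modified Patankar-Euler step has a system matrix A with A_{ii} = 1 + Δt ∑_j d_{i,j}(f^n)/f_i^n ≥ 1 and off-diagonal entries A_{ij} = −Δt p_{i,j}(f^n)/f_j^n ≤ 0 for i ≠ j, and A is strictly column diagonally dominant when all d_{i,j} with j ≠ i satisfy p = d symmetry; consequently A is invertible and its inverse has nonnegative entries (A is an M-matrix). -/
lemma mpe_aux_nonneg {N : ℕ} (B : Matrix (Fin N) (Fin N) ℝ)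
    (hdom : ∀ i, ∑ k ∈ Finset.univ.erase i, |B i k| < B i i)
    (hoff : ∀ i k, i ≠ k → B i k ≤ 0)
    (x b : Fin N → ℝ) (hb : ∀ k, 0 ≤ b k) (hx : B.mulVec x = b) :
    ∀ k, 0 ≤ x k := by
  by_contra h
  push_neg at h
  obtain ⟨k0, hk0⟩ := h
  obtain ⟨i, -, hi⟩ := Finset.exists_min_image Finset.univ x ⟨k0, Finset.mem_univ k0⟩
  have hxi : x i < 0 := lt_of_le_of_lt (hi k0 (Finset.mem_univ k0)) hk0
  have hbi : b i = ∑ k, B i k * x k := by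
    rw [← hx]; simp [Matrix.mulVec, dotProduct]
  have hsplit : b i = B i i * x i + ∑ k ∈ Finset.univ.erase i, B i k * x k := by
    rw [hbi, ← Finset.add_sum_erase _ _ (Finset.mem_univ i)]
  have hterm : ∀ k ∈ Finset.univ.erase i, B i k * x k ≤ B i k * x i := by
    intro k hk
    have hne : i ≠ k := fun h => (Finset.ne_of_mem_erase hk) h.symm
    exact mul_le_mul_of_nonpos_left (hi k (Finset.mem_univ k)) (hoff i k hne)
  have h1 : b i ≤ B i i * x i + (∑ k ∈ Finset.univ.erase i, B i k) * x i := by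
    rw [hsplit, Finset.sum_mul]
    exact add_le_add_right (Finset.sum_le_sum hterm) _
  have h2 : 0 < B i i + ∑ k ∈ Finset.univ.erase i, B i k := by
    have := hdom i
    have habs : -∑ k ∈ Finset.univ.erase i, B i k ≤ ∑ k ∈ Finset.univ.erase i, |B i k| := by
      rw [← Finset.sum_neg_distrib]
      exact Finset.sum_le_sum fun k _ => neg_le_abs _
    linarith
  have : b i < 0 := by
    calc b i ≤ (B i i + ∑ k ∈ Finset.univ.erase i, B i k) * x i := by
            rw [add_mul] at *; linarith
      _ < 0 := mul_neg_of_pos_of_neg h2 hxi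
  exact absurd (hb i) (not_le.mpr this)

theorem MPE_matrix_is_M_matrix
    (N : ℕ) (Δt : ℝ) (hΔt : 0 < Δt)
    (fn : Fin N → ℝ) (hfn : ∀ i, 0 < fn i)
    (p d : Fin N → Fin N → ℝ)
    (hp : ∀ i j, 0 ≤ p i j) (hd : ∀ i j, 0 ≤ d i j)
    (hsym : ∀ i j, i ≠ j → p i j = d j i)
    (hpd : ∀ i, p i i = 0) (hdd : ∀ i, d i i = 0)
    (A : Matrix (Fin N) (Fin N) ℝ)
    (hAdiag : ∀ i, A i i = 1 + Δt * ∑ j, d i j / fn i)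
    (hAoff : ∀ i j, i ≠ j → A i j = -(Δt * p i j / fn j)) :
    (∀ i, 1 ≤ A i i) ∧
    (∀ i j, i ≠ j → A i j ≤ 0) ∧
    (∀ j, ∑ i ∈ Finset.univ.erase j, |A i j| < A j j) ∧
    IsUnit A ∧
    (∀ i j, 0 ≤ A⁻¹ i j) := by
  have hdiag1 : ∀ i, 1 ≤ A i i := by
    intro i
    rw [hAdiag i]
    have : 0 ≤ ∑ j, d i j / fn i :=
      Finset.sum_nonneg fun j _ => div_nonneg (hd i j) (hfn i).le
    nlinarith
  have hoff : ∀ i j, i ≠ j → A i j ≤ 0 := by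
    intro i j hij
    rw [hAoff i j hij]
    have : 0 ≤ Δt * p i j / fn j := div_nonneg (mul_nonneg hΔt.le (hp i j)) (hfn j).le
    linarith
  have hdom : ∀ j, ∑ i ∈ Finset.univ.erase j, |A i j| < A j j := by
    intro j
    have habs : ∀ i ∈ Finset.univ.erase j, |A i j| = Δt * p i j / fn j := by
      intro i hi
      have hij : i ≠ j := Finset.ne_of_mem_erase hi
      rw [hAoff i j hij, abs_neg, abs_of_nonneg (div_nonneg (mul_nonneg hΔt.le (hp i j)) (hfn j).le)]
    rw [Finset.sum_congr rfl habs, hAdiag j]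
    have hsum : ∑ i ∈ Finset.univ.erase j, Δt * p i j / fn j
        = Δt * ∑ i, d j i / fn j := by
      rw [Finset.mul_sum]
      rw [← Finset.add_sum_erase _ (fun i => Δt * (d j i / fn j)) (Finset.mem_univ j)]
      rw [hdd j]
      simp only [zero_div, mul_zero, zero_add]
      apply Finset.sum_congr rfl
      intro i hi
      have hij : i ≠ j := Finset.ne_of_mem_erase hi
      rw [hsym i j hij]
      ring
    rw [hsum]
    linarith
  have hdomT : ∀ i, ∑ k ∈ Finset.univ.erase i, |A.transpose i k| < A.transpose i i := by
    intro i
    simpa [Matrix.transpose_apply] using hdom i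
  have hdet : A.det ≠ 0 := by
    apply det_ne_zero_of_sum_col_lt_diag
    intro k
    have := hdom k
    have h1 : 1 ≤ A k k := hdiag1 k
    calc ∑ i ∈ Finset.univ.erase k, ‖A i k‖ = ∑ i ∈ Finset.univ.erase k, |A i k| := by
          simp [Real.norm_eq_abs]
      _ < A k k := hdom k
      _ ≤ ‖A k k‖ := le_abs_self _
  have hunit : IsUnit A := by
    rw [Matrix.isUnit_iff_isUnit_det]
    exact isUnit_iff_ne_zero.mpr hdet
  refine ⟨hdiag1, hoff, hdom, hunit, ?_⟩
  intro i j
  have hinv : A⁻¹ * A = 1 := Matrix.nonsing_inv_mul A (isUnit_iff_ne_zero.mpr hdet)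
  have hoffT : ∀ a k, a ≠ k → A.transpose a k ≤ 0 := fun a k h => hoff k a (Ne.symm h)
  have hmul : A.transpose.mulVec (fun k => A⁻¹ i k) = fun k => (1 : Matrix (Fin N) (Fin N) ℝ) i k := by
    funext k
    have : (A⁻¹ * A) i k = (1 : Matrix (Fin N) (Fin N) ℝ) i k := by rw [hinv]
    simpa [Matrix.mulVec, dotProduct, Matrix.mul_apply, mul_comm] using this
  have hb : ∀ k, (0:ℝ) ≤ (1 : Matrix (Fin N) (Fin N) ℝ) i k := by
    intro k
    by_cases h : i = k <;> simp [Matrix.one_apply, h]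
  exact mpe_aux_nonneg A.transpose hdomT hoffT _ _ hb hmul j
end

section
/- The modified Patankar-Euler scheme is unconditionally positive: for any Δt > 0 and any f^n with all components positive, the (unique) solution f^{n+1} of the MPE linear system has all components positive. -/
theorem MPE_unconditionally_positive
    (N : ℕ) (Δt : ℝ) (hΔt : 0 < Δt)
    (fn fn1 : Fin N → ℝ) (hfn : ∀ i, 0 < fn i)
    (p d : Fin N → Fin N → ℝ)
    (hp : ∀ i j, 0 ≤ p i j) (hd : ∀ i j, 0 ≤ d i j)
    (hsym : ∀ i j, i ≠ j → p i j = d j i)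
    (hpd : ∀ i, p i i = 0) (hdd : ∀ i, d i i = 0)
    (hupd : ∀ i, fn1 i = fn i +
      Δt * (∑ j, p i j * (fn1 j / fn j) - ∑ j, d i j * (fn1 i / fn i))) :
    ∀ i, 0 < fn1 i := by
  by_contra hcon
  push_neg at hcon
  obtain ⟨i0, hi0⟩ := hcon
  have hfn' : ∀ i, fn i ≠ 0 := fun i => (hfn i).ne'
  set g : Fin N → ℝ := fun i => fn1 i / fn i with hg
  have hpd' : ∀ i j, p i j = d j i := by
    intro i j
    by_cases h : i = j
    · subst h; rw [hpd, hdd]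
    · exact hsym i j h
  set S : Finset (Fin N) := Finset.univ.filter fun i => fn1 i ≤ 0 with hS
  have hi0S : i0 ∈ S := by simp [hS, hi0]
  have hSg : ∀ i ∈ S, g i ≤ 0 := by
    intro i hi
    simp only [hS, Finset.mem_filter] at hi
    exact div_nonpos_of_nonpos_of_nonneg hi.2 (hfn i).le
  have hScg : ∀ j, j ∉ S → 0 ≤ g j := by
    intro j hj
    simp only [hS, Finset.mem_filter, Finset.mem_univ, true_and, not_le] at hj
    exact (div_pos hj (hfn j)).le
  -- key reformulation of the scheme
  have key : ∀ i, fn1 i + Δt * ((∑ j, d i j) * g i)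
      = fn i + Δt * ∑ j, p i j * g j := by
    intro i
    have h := hupd i
    rw [← Finset.sum_mul] at h
    show fn1 i + Δt * ((∑ j, d i j) * (fn1 i / fn i))
      = fn i + Δt * ∑ j, p i j * (fn1 j / fn j)
    linarith [h]
  have Beq : ∑ i ∈ S, fn1 i + Δt * ∑ i ∈ S, ((∑ j, d i j) * g i)
      = ∑ i ∈ S, fn i + Δt * ∑ i ∈ S, ∑ j, p i j * g j := by
    have := Finset.sum_congr rfl (fun i (_ : i ∈ S) => key i)
    simpa [Finset.sum_add_distrib, Finset.mul_sum] using this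
  -- the within-S exchange terms coincide
  have exch : ∑ i ∈ S, ∑ j ∈ S, p i j * g j
      = ∑ i ∈ S, ((∑ j ∈ S, d i j) * g i) := by
    rw [Finset.sum_comm]
    apply Finset.sum_congr rfl
    intro j _
    rw [Finset.sum_mul]
    apply Finset.sum_congr rfl
    intro i _
    rw [hpd' i j]
  -- bound the destruction side
  have hDle : ∑ i ∈ S, ((∑ j, d i j) * g i) ≤ ∑ i ∈ S, ((∑ j ∈ S, d i j) * g i) := by
    apply Finset.sum_le_sum
    intro i hi
    apply mul_le_mul_of_nonpos_right _ (hSg i hi)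
    exact Finset.sum_le_sum_of_subset_of_nonneg (Finset.subset_univ S)
      (fun j _ _ => hd i j)
  -- bound the production side
  have hPge : ∑ i ∈ S, ((∑ j ∈ S, d i j) * g i) ≤ ∑ i ∈ S, ∑ j, p i j * g j := by
    rw [← exch]
    apply Finset.sum_le_sum
    intro i _
    apply Finset.sum_le_sum_of_subset_of_nonneg (Finset.subset_univ S)
    intro j _ hj
    exact mul_nonneg (hp i j) (hScg j hj)
  have h1 : ∑ i ∈ S, fn i ≤ ∑ i ∈ S, fn1 i := by
    nlinarith [Beq, hDle, hPge, hΔt]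
  have h2 : ∑ i ∈ S, fn1 i ≤ 0 := by
    apply Finset.sum_nonpos
    intro i hi
    simp only [hS, Finset.mem_filter] at hi
    exact hi.2
  have h3 : 0 < ∑ i ∈ S, fn i :=
    Finset.sum_pos (fun i _ => hfn i) ⟨i0, hi0S⟩
  linarith
end

section
/- Each stage of the second-order modified Patankar-Runge-Kutta scheme is conservative: if the intermediate stage f̃ and the update f^{n+1} satisfy the MPRK equations with rates satisfying p_{i,j} = d_{j,i} for i ≠ j and zero diagonals, then ∑_i f̃_i = ∑_i f_i^n and ∑_i f_i^{n+1} = ∑_i f_i^n. -/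
lemma MPRK_key {N : ℕ} (q r : Fin N → Fin N → ℝ)
    (hsym : ∀ i j, i ≠ j → q i j = r j i)
    (hq : ∀ i, q i i = 0) (hr : ∀ i, r i i = 0) (g : Fin N → ℝ) :
    ∑ i, (∑ j, q i j * g j - ∑ j, r i j * g i) = 0 := by
  rw [Finset.sum_sub_distrib]
  have h1 : ∀ i j : Fin N, q i j = r j i := by
    intro i j
    by_cases h : i = j
    · subst h; rw [hq, hr]
    · exact hsym i j h
  have : ∑ i, ∑ j, q i j * g j = ∑ i, ∑ j, r j i * g j := by
    simp only [h1]
  rw [this, Finset.sum_comm]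
  simp

theorem MPRK_conservative
    (N : ℕ) (Δt : ℝ) (hΔt : 0 < Δt)
    (fn ftil fn1 : Fin N → ℝ)
    (hfn : ∀ i, 0 < fn i) (hftil : ∀ i, 0 < ftil i)
    (p d : Fin N → Fin N → (Fin N → ℝ) → ℝ)
    (hp : ∀ i j f, 0 ≤ p i j f) (hd : ∀ i j f, 0 ≤ d i j f)
    (hsym : ∀ i j, i ≠ j → ∀ f, p i j f = d j i f)
    (hpd : ∀ i f, p i i f = 0) (hdd : ∀ i f, d i i f = 0)
    (hstage : ∀ i, ftil i = fn i +
      Δt * (∑ j, p i j fn * (ftil j / fn j) - ∑ j, d i j fn * (ftil i / fn i)))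
    (hupd : ∀ i, fn1 i = fn i +
      (Δt / 2) * (∑ j, (p i j fn + p i j ftil) * (fn1 j / ftil j)
        - ∑ j, (d i j fn + d i j ftil) * (fn1 i / ftil i))) :
    (∑ i, ftil i = ∑ i, fn i) ∧ (∑ i, fn1 i = ∑ i, fn i) := by
  constructor
  · have := MPRK_key (fun i j => p i j fn) (fun i j => d i j fn)
      (fun i j h => hsym i j h fn) (fun i => hpd i fn) (fun i => hdd i fn)
      (fun j => ftil j / fn j)
    calc ∑ i, ftil i = ∑ i, (fn i +
        Δt * (∑ j, p i j fn * (ftil j / fn j) - ∑ j, d i j fn * (ftil i / fn i))) := by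
          exact Finset.sum_congr rfl (fun i _ => hstage i)
      _ = ∑ i, fn i := by
          rw [Finset.sum_add_distrib, ← Finset.mul_sum, this, mul_zero, add_zero]
  · have := MPRK_key (fun i j => p i j fn + p i j ftil) (fun i j => d i j fn + d i j ftil)
      (fun i j h => by show p i j fn + p i j ftil = d j i fn + d j i ftil; rw [hsym i j h fn, hsym i j h ftil])
      (fun i => by show p i i fn + p i i ftil = 0; rw [hpd, hpd, add_zero]) (fun i => by show d i i fn + d i i ftil = 0; rw [hdd, hdd, add_zero])
      (fun j => fn1 j / ftil j)
    calc ∑ i, fn1 i = ∑ i, (fn i +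
        (Δt / 2) * (∑ j, (p i j fn + p i j ftil) * (fn1 j / ftil j)
          - ∑ j, (d i j fn + d i j ftil) * (fn1 i / ftil i))) := by
          exact Finset.sum_congr rfl (fun i _ => hupd i)
      _ = ∑ i, fn i := by
          rw [Finset.sum_add_distrib, ← Finset.mul_sum, this, mul_zero, add_zero]
end

section
/- The Chang-Cooper weight function δ(λ) = 1/(1 − exp(λ)) + 1/λ is strictly decreasing on ℝ∖{0} (extended continuously by δ(0) = 1/2), with limits δ(λ) → 1 as λ → −∞ and δ(λ) → 0 as λ → +∞. -/
open Real Filter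

-- Padé inequality: x + 2 - (2-x)exp x > 0 for x > 0
lemma cc_pade {x : ℝ} (hx : 0 < x) : 0 < x + 2 - (2 - x) * Real.exp x := by
  set g : ℝ → ℝ := fun x => x + 2 - (2 - x) * Real.exp x with hg
  have hg' : ∀ y : ℝ, HasDerivAt g (1 - (1 - y) * Real.exp y) y := by
    intro y
    have h1 : HasDerivAt (fun y : ℝ => (2 - y) * Real.exp y)
        ((-1) * Real.exp y + (2 - y) * Real.exp y) y :=
      (((hasDerivAt_id y).const_sub 2)).mul (Real.hasDerivAt_exp y)
    have h2 : HasDerivAt (fun y : ℝ => y + 2) 1 y := (hasDerivAt_id y).add_const 2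
    have := h2.sub h1
    exact this.congr_deriv (by ring)
  set g1 : ℝ → ℝ := fun y => 1 - (1 - y) * Real.exp y with hg1
  have hg1' : ∀ y : ℝ, HasDerivAt g1 (y * Real.exp y) y := by
    intro y
    have h1 : HasDerivAt (fun y : ℝ => (1 - y) * Real.exp y)
        ((-1) * Real.exp y + (1 - y) * Real.exp y) y :=
      (((hasDerivAt_id y).const_sub 1)).mul (Real.hasDerivAt_exp y)
    have := h1.const_sub 1
    exact this.congr_deriv (by ring)
  have hg1pos : ∀ y : ℝ, 0 < y → 0 < g1 y := by
    have hmono : StrictMonoOn g1 (Set.Ici (0:ℝ)) := by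
      apply strictMonoOn_of_deriv_pos (convex_Ici 0)
      · exact fun y _ => (hg1' y).differentiableAt.continuousAt.continuousWithinAt
      · intro y hy
        rw [interior_Ici] at hy
        rw [(hg1' y).deriv]
        exact mul_pos hy (Real.exp_pos y)
    intro y hy
    have := hmono Set.self_mem_Ici (Set.mem_Ici.mpr hy.le) hy
    simpa [hg1] using this
  have hmono : StrictMonoOn g (Set.Ici (0:ℝ)) := by
    apply strictMonoOn_of_deriv_pos (convex_Ici 0)
    · exact fun y _ => (hg' y).differentiableAt.continuousAt.continuousWithinAt
    · intro y hy
      rw [interior_Ici] at hy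
      rw [(hg' y).deriv]
      exact hg1pos y hy
  have := hmono Set.self_mem_Ici (Set.mem_Ici.mpr hx.le) hx
  simpa [hg] using this

-- key derivative inequality: x^2 exp x < (exp x - 1)^2 for x > 0
lemma cc_key {x : ℝ} (hx : 0 < x) : x ^ 2 * Real.exp x < (Real.exp x - 1) ^ 2 := by
  have h2 : x / 2 < Real.sinh (x / 2) := Real.self_lt_sinh_iff.mpr (by linarith)
  rw [Real.sinh_eq] at h2
  have hpos : 0 < Real.exp (x / 2) := Real.exp_pos _
  have hx2 : Real.exp (x / 2) * Real.exp (x / 2) = Real.exp x := by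
    rw [← Real.exp_add]; ring_nf
  have hinv : Real.exp (-(x / 2)) * Real.exp (x / 2) = 1 := by
    rw [← Real.exp_add]; simp
  have hkey : x * Real.exp (x / 2) < Real.exp x - 1 := by
    have := mul_lt_mul_of_pos_right h2 hpos
    nlinarith
  nlinarith [mul_pos hx hpos]

lemma cc_inv_atBot {f : ℝ → ℝ} {l : Filter ℝ} (h : Tendsto f l atBot) :
    Tendsto (fun x => (f x)⁻¹) l (nhds 0) := by
  have h1 : Tendsto (fun x => -f x) l atTop := tendsto_neg_atBot_atTop.comp h
  have h2 : Tendsto (fun x => (-f x)⁻¹) l (nhds 0) := h1.inv_tendsto_atTop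
  have h3 := h2.neg
  simpa [inv_neg] using h3

theorem ChangCooper_delta_strictAnti_and_limits
    (δ : ℝ → ℝ)
    (hδ : ∀ l : ℝ, l ≠ 0 → δ l = 1 / (1 - Real.exp l) + 1 / l)
    (hδ0 : δ 0 = 1 / 2) :
    StrictAnti δ ∧
    Filter.Tendsto δ Filter.atBot (nhds 1) ∧
    Filter.Tendsto δ Filter.atTop (nhds 0) := by
  have hexp_ne : ∀ x : ℝ, x ≠ 0 → 1 - Real.exp x ≠ 0 := by
    intro x hx h
    have h1 : Real.exp x = 1 := by linarith
    rw [← Real.exp_zero] at h1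
    exact hx (Real.exp_eq_exp.mp h1)
  -- symmetry
  have hsym : ∀ x : ℝ, x ≠ 0 → δ x + δ (-x) = 1 := by
    intro x hx
    rw [hδ x hx, hδ (-x) (neg_ne_zero.mpr hx), Real.exp_neg]
    have h1 : 1 - Real.exp x ≠ 0 := hexp_ne x hx
    have h2 : Real.exp x ≠ 0 := (Real.exp_pos x).ne'
    have h3 : 1 - (Real.exp x)⁻¹ ≠ 0 := by
      intro h
      apply hexp_ne (-x) (neg_ne_zero.mpr hx)
      rw [Real.exp_neg]; exact h
    have h4 : Real.exp x - 1 ≠ 0 := fun h => h1 (by linarith)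
    have h5 : 1 - (Real.exp x)⁻¹ = (Real.exp x - 1) / Real.exp x := by
      field_simp
    rw [h5, one_div_div]
    field_simp [hx, h2, h1, h4]
    ring
  -- δ x < 1/2 for x > 0
  have hhalf : ∀ x : ℝ, 0 < x → δ x < 1 / 2 := by
    intro x hx
    rw [hδ x hx.ne']
    have h1 : 1 - Real.exp x < 0 := by
      have := Real.add_one_lt_exp hx.ne'
      linarith
    have hg := cc_pade hx
    have heq : 1 / (1 - Real.exp x) + 1 / x - 1 / 2
        = (x + 2 - (2 - x) * Real.exp x) / (2 * x * (1 - Real.exp x)) := by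
      have h2 : (1:ℝ) - Real.exp x ≠ 0 := by linarith
      field_simp [hx.ne', h2]
      ring
    have hneg : (x + 2 - (2 - x) * Real.exp x) / (2 * x * (1 - Real.exp x)) < 0 :=
      div_neg_of_pos_of_neg hg (by nlinarith)
    linarith
  -- strict anti on Ioi 0
  have hanti : StrictAntiOn δ (Set.Ioi (0:ℝ)) := by
    have hderiv : ∀ x : ℝ, 0 < x →
        HasDerivAt δ (Real.exp x / (1 - Real.exp x) ^ 2 - 1 / x ^ 2) x := by
      intro x hx
      have h1 : 1 - Real.exp x ≠ 0 := hexp_ne x hx.ne'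
      have he : HasDerivAt (fun y : ℝ => 1 - Real.exp y) (-Real.exp x) x :=
        (Real.hasDerivAt_exp x).const_sub 1
      have hi : HasDerivAt (fun y : ℝ => (1 - Real.exp y)⁻¹)
          (-(-Real.exp x) / (1 - Real.exp x) ^ 2) x := he.inv h1
      have hj : HasDerivAt (fun y : ℝ => y⁻¹) (-(x ^ 2)⁻¹) x := hasDerivAt_inv hx.ne'
      have hf : HasDerivAt (fun y : ℝ => (1 - Real.exp y)⁻¹ + y⁻¹)
          (Real.exp x / (1 - Real.exp x) ^ 2 - 1 / x ^ 2) x := by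
        have := hi.add hj
        exact this.congr_deriv (by ring)
      apply hf.congr_of_eventuallyEq
      have hmem : {y : ℝ | y ≠ 0} ∈ nhds x := by
        exact IsOpen.mem_nhds isOpen_ne hx.ne'
      filter_upwards [hmem] with y hy
      rw [hδ y hy, one_div, one_div]
    apply strictAntiOn_of_deriv_neg (convex_Ioi 0)
    · exact fun y hy => (hderiv y hy).differentiableAt.continuousAt.continuousWithinAt
    · intro y hy
      rw [interior_Ioi] at hy
      rw [(hderiv y hy).deriv]
      have h1 : 1 - Real.exp y ≠ 0 := hexp_ne y hy.ne'
      have hk := cc_key hy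
      have hd2 : (0:ℝ) < (1 - Real.exp y) ^ 2 := by
        rcases h1.lt_or_gt with h | h
        · nlinarith
        · nlinarith
      rw [sub_neg, div_lt_div_iff₀ hd2 (pow_pos hy 2)]
      nlinarith
  -- δ x > 1/2 for x < 0
  have hhalf' : ∀ x : ℝ, x < 0 → 1 / 2 < δ x := by
    intro x hx
    have := hsym x hx.ne
    have := hhalf (-x) (by linarith)
    linarith
  constructor
  · intro a b hab
    rcases lt_trichotomy a 0 with ha | ha | ha
    · rcases lt_trichotomy b 0 with hb | hb | hb
      · -- both negative: use symmetry
        have h1 := hsym a ha.ne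
        have h2 := hsym b hb.ne
        have := hanti (Set.mem_Ioi.mpr (by linarith : (0:ℝ) < -b))
          (Set.mem_Ioi.mpr (by linarith : (0:ℝ) < -a)) (by linarith)
        linarith
      · rw [hb, hδ0]; exact hhalf' a ha
      · have := hhalf b hb
        have := hhalf' a ha
        linarith
    · rw [ha, hδ0]
      exact hhalf b (ha ▸ hab)
    · exact hanti (Set.mem_Ioi.mpr ha) (Set.mem_Ioi.mpr (ha.trans hab)) hab
  constructor
  · -- atBot limit = 1
    have h1 : Tendsto (fun x : ℝ => 1 / (1 - Real.exp x) + 1 / x) atBot (nhds 1) := by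
      have he : Tendsto (fun x : ℝ => 1 - Real.exp x) atBot (nhds 1) := by
        have := Real.tendsto_exp_atBot
        simpa using (tendsto_const_nhds (x := (1:ℝ))).sub this
      have hinv : Tendsto (fun x : ℝ => (1 - Real.exp x)⁻¹) atBot (nhds 1) := by
        simpa using he.inv₀ one_ne_zero
      have hx : Tendsto (fun x : ℝ => x⁻¹) atBot (nhds 0) := cc_inv_atBot tendsto_id
      simpa [one_div] using hinv.add hx
    apply h1.congr'
    filter_upwards [eventually_lt_atBot (0:ℝ)] with x hx
    exact (hδ x hx.ne).symm
  · -- atTop limit = 0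
    have h1 : Tendsto (fun x : ℝ => 1 / (1 - Real.exp x) + 1 / x) atTop (nhds 0) := by
      have he : Tendsto (fun x : ℝ => 1 - Real.exp x) atTop atBot := by
        have := tendsto_atBot_add_const_left atTop (1:ℝ)
          (tendsto_neg_atTop_atBot.comp Real.tendsto_exp_atTop)
        simpa [sub_eq_add_neg, Function.comp] using this
      have hinv : Tendsto (fun x : ℝ => (1 - Real.exp x)⁻¹) atTop (nhds 0) :=
        cc_inv_atBot he
      have hx : Tendsto (fun x : ℝ => x⁻¹) atTop (nhds 0) := tendsto_inv_atTop_zero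
      simpa [one_div] using hinv.add hx
    apply h1.congr'
    filter_upwards [eventually_gt_atTop (0:ℝ)] with x hx
    exact (hδ x hx.ne').symm
end

section
/- The stationary solution f_∞(w) = K (1 − w²)^{−2} ((1+w)/(1−w))^{u/(2σ²)} exp(−(1 − u w)/(σ²(1 − w²))) satisfies the stationary flux equation (w − u) f_∞(w) + d/dw (D(w) f_∞(w)) = 0 on (−1, 1), where D(w) = (σ²/2)(1 − w²)². -/
theorem stationary_solution_flux_vanishes
    (σ u K : ℝ) (hσ : 0 < σ) (hu : u ∈ Set.Ioo (-1 : ℝ) 1) (hK : 0 < K) :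
    ∀ w ∈ Set.Ioo (-1 : ℝ) 1,
      (w - u) * (fun w => K / (1 - w ^ 2) ^ 2
          * ((1 + w) / (1 - w)) ^ (u / (2 * σ ^ 2))
          * Real.exp (-(1 - u * w) / (σ ^ 2 * (1 - w ^ 2)))) w
      + deriv (fun w => (σ ^ 2 / 2 * (1 - w ^ 2) ^ 2)
          * (K / (1 - w ^ 2) ^ 2
          * ((1 + w) / (1 - w)) ^ (u / (2 * σ ^ 2))
          * Real.exp (-(1 - u * w) / (σ ^ 2 * (1 - w ^ 2))))) w = 0 := by
  intro w hw
  obtain ⟨hw1, hw2⟩ := hw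
  have hσ2 : (0:ℝ) < σ ^ 2 := by positivity
  have h1p : (0:ℝ) < 1 + w := by linarith
  have h1m : (0:ℝ) < 1 - w := by linarith
  have hq : (0:ℝ) < 1 - w ^ 2 := by nlinarith
  have hA : (0:ℝ) < (1 + w) / (1 - w) := div_pos h1p h1m
  set p : ℝ := u / (2 * σ ^ 2) with hp
  -- rewrite the function whose derivative we take, on a neighborhood of w
  have heq : (fun x => (σ ^ 2 / 2 * (1 - x ^ 2) ^ 2)
          * (K / (1 - x ^ 2) ^ 2
          * ((1 + x) / (1 - x)) ^ p
          * Real.exp (-(1 - u * x) / (σ ^ 2 * (1 - x ^ 2)))))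
      =ᶠ[nhds w] (fun x => (σ ^ 2 / 2 * K)
          * (((1 + x) / (1 - x)) ^ p
          * Real.exp (-(1 - u * x) / (σ ^ 2 * (1 - x ^ 2))))) := by
    filter_upwards [isOpen_Ioo.mem_nhds (Set.mem_Ioo.mpr ⟨hw1, hw2⟩)] with x hx
    obtain ⟨hx1, hx2⟩ := hx
    have hqx : (0:ℝ) < 1 - x ^ 2 := by nlinarith
    field_simp
  rw [heq.deriv_eq]
  -- derivatives
  have hdA : HasDerivAt (fun x => (1 + x) / (1 - x)) (2 / (1 - w) ^ 2) w := by
    have h := ((hasDerivAt_id w).const_add 1).div ((hasDerivAt_id w).const_sub 1) (ne_of_gt h1m)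
    refine h.congr_deriv ?_
    simp only [id]
    ring
  have hR : HasDerivAt (fun x => ((1 + x) / (1 - x)) ^ p)
      (2 / (1 - w) ^ 2 * p * ((1 + w) / (1 - w)) ^ (p - 1)) w :=
    hdA.rpow_const (Or.inl (ne_of_gt hA))
  have hNum : HasDerivAt (fun x : ℝ => -(1 - u * x)) u w := by
    have h := (((hasDerivAt_id w).const_mul u).const_sub 1).neg
    refine h.congr_deriv ?_
    ring
  have hDen : HasDerivAt (fun x : ℝ => σ ^ 2 * (1 - x ^ 2)) (σ ^ 2 * (-(2 * w))) w := by
    have h := ((hasDerivAt_pow 2 w).const_sub 1).const_mul (σ ^ 2)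
    refine h.congr_deriv ?_
    norm_num
  have hDen0 : σ ^ 2 * (1 - w ^ 2) ≠ 0 := by positivity
  have hE : HasDerivAt (fun x : ℝ => -(1 - u * x) / (σ ^ 2 * (1 - x ^ 2)))
      ((u * (σ ^ 2 * (1 - w ^ 2)) - -(1 - u * w) * (σ ^ 2 * (-(2 * w)))) / (σ ^ 2 * (1 - w ^ 2)) ^ 2) w :=
    hNum.div hDen hDen0
  have hExp := hE.exp
  have hg := (hR.mul hExp).const_mul (σ ^ 2 / 2 * K)
  have hg' := hg.deriv
  simp only [Pi.mul_apply] at hg'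
  rw [hg']
  -- arithmetic
  have hsub : ((1 + w) / (1 - w)) ^ (p - 1) = ((1 + w) / (1 - w)) ^ p / ((1 + w) / (1 - w)) :=
    Real.rpow_sub_one (ne_of_gt hA) p
  rw [hsub, hp]
  have hq' : (1 - w ^ 2) ≠ 0 := ne_of_gt hq
  have h1m' : (1 - w) ≠ 0 := ne_of_gt h1m
  have h1p' : (1 + w) ≠ 0 := ne_of_gt h1p
  have hσ' : σ ≠ 0 := ne_of_gt hσ
  field_simp
  ring
end
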